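/- Let α ∈ (0,1), β ∈ (α,1], and ν ∈ ℕ with 2ν > 1/(1-α). Then for every x ∈ ℝ and m ∈ ℕ, |K_{α,ν}(x + t_m(x)) - K_{α,ν}(x)| / |t_m(x)|^β ≥ K(m,ν,α,β), where K(m,ν,α,β) := 2^{β-1} ((2^{2ν(1-α)} - 2)/(2^{2ν(1-α)} - 1)) (2^{2ν(β-α)})^m. -/

import Mathlib

/-- The sawtooth function: φ(x) = |x| on [-1,1], extended 2-periodically. -/
noncomputable def phi (x : ℝ) : ℝ := |x - 2 * round (x / 2)|

lemma round_eq_floor_of (z : ℝ) (h : Int.fract z < 1/2) : round z = ⌊z⌋ := by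
  rw [round_eq, Int.floor_eq_iff (R := ℝ)]
  constructor
  · have := Int.floor_le z; push_cast; linarith
  · have := Int.fract_nonneg z
    have hz : z = ⌊z⌋ + Int.fract z := (Int.floor_add_fract z).symm
    push_cast; linarith

lemma round_eq_floor_add_one_of (z : ℝ) (h : 1/2 ≤ Int.fract z) : round z = ⌊z⌋ + 1 := by
  rw [round_eq, Int.floor_eq_iff (R := ℝ)]
  have hz : z = ⌊z⌋ + Int.fract z := (Int.floor_add_fract z).symm
  have h2 := Int.fract_lt_one z
  constructor
  · push_cast; linarith
  · push_cast; linarith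

lemma phi_eq_fract (y : ℝ) : phi y = 1 - |2 * Int.fract (y/2) - 1| := by
  have hz : y/2 = ⌊y/2⌋ + Int.fract (y/2) := (Int.floor_add_fract _).symm
  unfold phi
  rcases lt_or_ge (Int.fract (y/2)) (1/2) with h | h
  · rw [round_eq_floor_of _ h]
    have h0 := Int.fract_nonneg (y/2)
    rw [abs_of_nonneg (by linarith), abs_of_nonpos (by linarith)]
    linarith
  · rw [round_eq_floor_add_one_of _ h]
    have h1 := Int.fract_lt_one (y/2)
    push_cast
    rw [abs_of_nonpos (by linarith), abs_of_nonneg (by linarith)]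
    linarith

lemma phi_nonneg (y : ℝ) : 0 ≤ phi y := abs_nonneg _

lemma phi_le_one (y : ℝ) : phi y ≤ 1 := by
  rw [phi_eq_fract]; have := abs_nonneg (2 * Int.fract (y/2) - 1); linarith

lemma phi_add_int_mul_two (y : ℝ) (n : ℤ) : phi (y + n * 2) = phi y := by
  unfold phi
  have : (y + n * 2) / 2 = y / 2 + n := by ring
  rw [this, round_add_intCast]
  push_cast; ring_nf

lemma phi_le_abs_sub (x : ℝ) (n : ℤ) : phi x ≤ |x - 2 * n| := by
  unfold phi
  rcases le_or_gt (1/2) (|x/2 - n|) with h | h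
  · calc |x - 2 * round (x/2)| = 2 * |x/2 - round (x/2)| := by
          rw [show x - 2 * round (x/2) = 2 * (x/2 - round (x/2)) by ring,
            abs_mul, abs_two]
      _ ≤ 2 * |x/2 - n| := by
          have := abs_sub_round (x/2); linarith
      _ = |x - 2*n| := by
          rw [show x - 2*(n:ℝ) = 2 * (x/2 - n) by ring, abs_mul, abs_two]
  · have hr : round (x/2) = n := by
      rw [round_eq]
      have h1 := abs_lt.mp h
      rw [Int.floor_eq_iff (R := ℝ)]
      constructor
      · push_cast; linarith [h1.2]
      · push_cast; linarith [h1.1]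
    rw [hr]

lemma phi_lip (a b : ℝ) : |phi a - phi b| ≤ |a - b| := by
  have h1 : phi a ≤ |a - b| + phi b := by
    calc phi a ≤ |a - 2 * round (b/2)| := phi_le_abs_sub a _
      _ ≤ |a - b| + |b - 2 * round (b/2)| := by
          have := abs_sub_abs_le_abs_sub (a - 2 * round (b/2)) (b - 2 * round (b/2))
          have := abs_add_le (a - b) (b - 2 * (round (b/2) : ℝ))
          calc |a - 2 * round (b/2)| = |(a-b) + (b - 2*(round (b/2):ℝ))| := by ring_nf
            _ ≤ _ := abs_add_le _ _
      _ = |a - b| + phi b := rfl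
  have h2 : phi b ≤ |a - b| + phi a := by
    calc phi b ≤ |b - 2 * round (a/2)| := phi_le_abs_sub b _
      _ ≤ |a - b| + phi a := by
          calc |b - 2 * round (a/2)| = |(-(a-b)) + (a - 2*(round (a/2):ℝ))| := by ring_nf
            _ ≤ |(-(a-b))| + |a - 2*(round (a/2):ℝ)| := abs_add_le _ _
            _ = |a - b| + phi a := by rw [abs_neg]; rfl
  rw [abs_sub_le_iff]; constructor <;> linarith

lemma fract_shift (y c : ℝ) : Int.fract (y/2 + c) = Int.fract (Int.fract (y/2) + c) := by
  conv_lhs => rw [show y/2 = (⌊y/2⌋:ℝ) + Int.fract (y/2) from (Int.floor_add_fract _).symm]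
  rw [add_assoc, Int.fract_intCast_add]

lemma fract_eq_fract_two_mul (y : ℝ) : Int.fract y = Int.fract (2 * Int.fract (y/2)) := by
  conv_lhs => rw [show y = ((2*⌊y/2⌋ : ℤ):ℝ) + 2 * Int.fract (y/2) by
    push_cast
    have := Int.floor_add_fract (y/2); linarith]
  rw [Int.fract_intCast_add]

lemma phi_step (y : ℝ) :
    |phi (y + (if Int.fract y ∈ Set.Ioc (0:ℝ) (1/2) then (1/2:ℝ) else -(1/2))) - phi y| = 1/2 := by
  set u := Int.fract (y/2) with hu
  have hu0 : 0 ≤ u := Int.fract_nonneg _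
  have hu1 : u < 1 := Int.fract_lt_one _
  have hy : Int.fract y = Int.fract (2 * u) := fract_eq_fract_two_mul y
  have habs : ∀ a b : ℝ, a - b = 1/2 ∨ a - b = -(1/2) → |a - b| = 1/2 := by
    rintro a b (h | h) <;> rw [h] <;> [exact abs_of_nonneg (by norm_num); simp]
  have hphiy : phi y = 1 - |2 * u - 1| := phi_eq_fract y
  have hplus : phi (y + 1/2) = 1 - |2 * Int.fract (u + 1/4) - 1| := by
    rw [phi_eq_fract, show (y + 1/2)/2 = y/2 + 1/4 by ring, fract_shift]
  have hminus : phi (y + -(1/2)) = 1 - |2 * Int.fract (u + -(1/4)) - 1| := by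
    rw [phi_eq_fract, show (y + -(1/2))/2 = y/2 + -(1/4) by ring, fract_shift]
  rcases lt_or_ge u (1/2) with h2 | h2
  · -- fract y = 2u
    have hfy : Int.fract y = 2 * u := by
      rw [hy, Int.fract_eq_self.mpr ⟨by linarith, by linarith⟩]
    have hA : |2 * u - 1| = 1 - 2 * u := by rw [abs_of_nonpos (by linarith)]; ring
    rcases eq_or_lt_of_le hu0 with h0 | h0
    · -- u = 0
      have hC : ¬ Int.fract y ∈ Set.Ioc (0:ℝ) (1/2) := by
        rw [hfy, ← h0]; simp
      have hf : Int.fract (u + -(1/4)) = 3/4 := by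
        rw [← h0, show (0:ℝ) + -(1/4) = (3/4 : ℝ) - (1:ℤ) by norm_num, Int.fract_sub_intCast,
          Int.fract_eq_self.mpr ⟨by norm_num, by norm_num⟩]
      have hB : |2 * Int.fract (u + -(1/4)) - 1| = 1/2 := by
        rw [hf]; rw [abs_of_nonneg (by norm_num)]; norm_num
      rw [if_neg hC, hminus, hB, hphiy, hA]
      apply habs; left; rw [← h0]; ring
    rcases le_or_gt u (1/4) with h4 | h4
    · -- u ∈ (0,1/4]
      have hC : Int.fract y ∈ Set.Ioc (0:ℝ) (1/2) := by
        rw [hfy]; constructor <;> linarith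
      have hf : Int.fract (u + 1/4) = u + 1/4 :=
        Int.fract_eq_self.mpr ⟨by linarith, by linarith⟩
      have hB : |2 * Int.fract (u + 1/4) - 1| = 1/2 - 2*u := by
        rw [hf, abs_of_nonpos (by linarith)]; ring
      rw [if_pos hC, hplus, hB, hphiy, hA]
      apply habs; left; ring
    · -- u ∈ (1/4, 1/2)
      have hC : ¬ Int.fract y ∈ Set.Ioc (0:ℝ) (1/2) := by
        rw [hfy]; intro hmem; have := hmem.2; linarith
      have hf : Int.fract (u + -(1/4)) = u - 1/4 :=
        Int.fract_eq_self.mpr ⟨by linarith, by linarith⟩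
      have hB : |2 * Int.fract (u + -(1/4)) - 1| = 3/2 - 2*u := by
        rw [hf, abs_of_nonpos (by linarith)]; ring
      rw [if_neg hC, hminus, hB, hphiy, hA]
      apply habs; right; ring
  · -- fract y = 2u - 1
    have hfy : Int.fract y = 2 * u - 1 := by
      rw [hy, ← Int.fract_sub_intCast (2*u) 1,
        show 2*u - ((1:ℤ):ℝ) = 2*u - 1 by norm_num,
        Int.fract_eq_self.mpr ⟨by linarith, by linarith⟩]
    have hA : |2 * u - 1| = 2 * u - 1 := abs_of_nonneg (by linarith)
    rcases eq_or_lt_of_le h2 with h0 | h0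
    · -- u = 1/2
      have hC : ¬ Int.fract y ∈ Set.Ioc (0:ℝ) (1/2) := by
        rw [hfy, ← h0]; norm_num
      have hf : Int.fract (u + -(1/4)) = 1/4 := by
        rw [← h0]; rw [Int.fract_eq_self.mpr ⟨by norm_num, by norm_num⟩]; norm_num
      have hB : |2 * Int.fract (u + -(1/4)) - 1| = 1/2 := by
        rw [hf, abs_of_nonpos (by norm_num)]; norm_num
      rw [if_neg hC, hminus, hB, hphiy, hA]
      apply habs; right; rw [← h0]; ring
    rcases lt_or_ge u (3/4) with h4 | h4
    · -- u ∈ (1/2, 3/4)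
      have hC : Int.fract y ∈ Set.Ioc (0:ℝ) (1/2) := by
        rw [hfy]; constructor <;> linarith
      have hf : Int.fract (u + 1/4) = u + 1/4 :=
        Int.fract_eq_self.mpr ⟨by linarith, by linarith⟩
      have hB : |2 * Int.fract (u + 1/4) - 1| = 2*u - 1/2 := by
        rw [hf, abs_of_nonneg (by linarith)]; ring
      rw [if_pos hC, hplus, hB, hphiy, hA]
      apply habs; right; ring
    rcases eq_or_lt_of_le h4 with h34 | h34
    · -- u = 3/4
      have hC : Int.fract y ∈ Set.Ioc (0:ℝ) (1/2) := by
        rw [hfy, ← h34]; norm_num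
      have hf : Int.fract (u + 1/4) = 0 := by
        rw [← h34, show (3/4:ℝ) + 1/4 = 0 + ((1:ℤ):ℝ) by norm_num, Int.fract_add_intCast,
          Int.fract_zero]
      have hB : |2 * Int.fract (u + 1/4) - 1| = 1 := by
        rw [hf]; norm_num
      rw [if_pos hC, hplus, hB, hphiy, hA]
      apply habs; right; rw [← h34]; ring
    · -- u ∈ (3/4, 1)
      have hC : ¬ Int.fract y ∈ Set.Ioc (0:ℝ) (1/2) := by
        rw [hfy]; intro hmem; have := hmem.2; linarith
      have hf : Int.fract (u + -(1/4)) = u - 1/4 :=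
        Int.fract_eq_self.mpr ⟨by linarith, by linarith⟩
      have hB : |2 * Int.fract (u + -(1/4)) - 1| = 2*u - 3/2 := by
        rw [hf, abs_of_nonneg (by linarith)]; ring
      rw [if_neg hC, hminus, hB, hphiy, hA]
      apply habs; left; ring

lemma Kfun_summable (α : ℝ) (ν : ℕ) (hα : 0 < α) (hν : 0 < ν) (x : ℝ) :
    Summable (fun k : ℕ => (2:ℝ)^(-(2*α*(ν:ℝ)*(k:ℝ))) * phi ((2:ℝ)^(2*ν*k) * x)) := by
  have hr0 : (0:ℝ) ≤ (2:ℝ)^(-(2*α*(ν:ℝ))) := (Real.rpow_pos_of_pos two_pos _).le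
  refine Summable.of_nonneg_of_le ?_ ?_
    (?_ : Summable fun k : ℕ => ((2:ℝ)^(-(2*α*(ν:ℝ))))^k)
  · intro k
    exact mul_nonneg (Real.rpow_pos_of_pos two_pos _).le (phi_nonneg _)
  · intro k
    have h1 : (2:ℝ)^(-(2*α*(ν:ℝ)*(k:ℝ))) = ((2:ℝ)^(-(2*α*(ν:ℝ))))^k := by
      rw [← Real.rpow_natCast ((2:ℝ)^(-(2*α*(ν:ℝ)))) k, ← Real.rpow_mul (by norm_num)]
      ring_nf
    calc (2:ℝ)^(-(2*α*(ν:ℝ)*(k:ℝ))) * phi ((2:ℝ)^(2*ν*k) * x)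
        ≤ (2:ℝ)^(-(2*α*(ν:ℝ)*(k:ℝ))) * 1 :=
          mul_le_mul_of_nonneg_left (phi_le_one _) (Real.rpow_pos_of_pos two_pos _).le
      _ = ((2:ℝ)^(-(2*α*(ν:ℝ))))^k := by rw [mul_one, h1]
  · apply summable_geometric_of_lt_one hr0
    apply Real.rpow_lt_one_of_one_lt_of_neg one_lt_two
    have : (0:ℝ) < ν := by exact_mod_cast hν
    nlinarith

lemma term_vanish (ν m k : ℕ) (hν : 0 < ν) (hk : m < k) (z s : ℝ)
    (hs : s = (2:ℝ)^(-(2*(ν:ℤ)*(m:ℤ)+1)) ∨ s = -(2:ℝ)^(-(2*(ν:ℤ)*(m:ℤ)+1))) :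
    phi ((2:ℝ)^(2*ν*k) * (z + s)) = phi ((2:ℝ)^(2*ν*k) * z) := by
  set n := 2*ν*k - (2*ν*m+1) with hn
  have hle2 : 2*ν*m + 2 ≤ 2*ν*k := by nlinarith [hν, hk]
  have hle : 2*ν*m+1 ≤ 2*ν*k := by omega
  have hn1 : 1 ≤ n := by omega
  have hpow : (2:ℝ)^(2*ν*k) * (2:ℝ)^(-(2*(ν:ℤ)*(m:ℤ)+1)) = 2^n := by
    calc (2:ℝ)^(2*ν*k) * (2:ℝ)^(-(2*(ν:ℤ)*(m:ℤ)+1))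
        = (2:ℝ)^(((2*ν*k:ℕ)):ℤ) * (2:ℝ)^(-(2*(ν:ℤ)*(m:ℤ)+1)) := by rw [zpow_natCast]
      _ = (2:ℝ)^((((2*ν*k:ℕ)):ℤ) + (-(2*(ν:ℤ)*(m:ℤ)+1))) := (zpow_add₀ two_ne_zero _ _).symm
      _ = (2:ℝ)^((n:ℤ)) := by
            congr 1
            rw [hn]
            push_cast [Nat.cast_sub hle]
            ring
      _ = 2^n := zpow_natCast _ _
  have h2 : (2:ℝ)^n = ((2^(n-1) : ℕ):ℝ) * 2 := by
    push_cast
    rw [← pow_succ]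
    congr 1
    omega
  rcases hs with hs | hs
  · have : (2:ℝ)^(2*ν*k) * (z + s) =
        (2:ℝ)^(2*ν*k) * z + (((2^(n-1) : ℕ) : ℤ) : ℝ) * 2 := by
      rw [mul_add, hs, hpow, h2]; push_cast; ring
    rw [this, phi_add_int_mul_two]
  · have : (2:ℝ)^(2*ν*k) * (z + s) =
        (2:ℝ)^(2*ν*k) * z + ((-(2^(n-1) : ℕ) : ℤ) : ℝ) * 2 := by
      rw [mul_add, hs, mul_neg, hpow, h2]; push_cast; ring
    rw [this, phi_add_int_mul_two]


/-- The Knopp-type function K_{α,ν}. -/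
noncomputable def Kfun (α : ℝ) (ν : ℕ) (x : ℝ) : ℝ :=
  ∑' k : ℕ, (2 : ℝ) ^ (-(2 * α * (ν : ℝ) * (k : ℝ))) * phi ((2 : ℝ) ^ (2 * ν * k) * x)

/-- The step function t_m: +2^{-2νm-1} if fract(2^{2νm}x) ∈ (0,1/2], else -2^{-2νm-1}. -/
noncomputable def tstep (ν m : ℕ) (x : ℝ) : ℝ :=
  if Int.fract ((2 : ℝ) ^ (2 * ν * m) * x) ∈ Set.Ioc (0 : ℝ) (1 / 2)
  then (2 : ℝ) ^ (-(2 * (ν : ℤ) * (m : ℤ) + 1))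
  else -(2 : ℝ) ^ (-(2 * (ν : ℤ) * (m : ℤ) + 1))

theorem Kfun_beta_quotient_lower_bound (α β : ℝ) (ν : ℕ)
    (hα : α ∈ Set.Ioo (0 : ℝ) 1) (hβ : β ∈ Set.Ioc α 1) (hν : 1 / (1 - α) < 2 * (ν : ℝ))
    (x : ℝ) (m : ℕ) :
    |Kfun α ν (x + tstep ν m x) - Kfun α ν x| / |tstep ν m x| ^ β ≥
      (2 : ℝ) ^ (β - 1)
        * (((2 : ℝ) ^ (2 * (ν : ℝ) * (1 - α)) - 2) / ((2 : ℝ) ^ (2 * (ν : ℝ) * (1 - α)) - 1))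
        * ((2 : ℝ) ^ (2 * (ν : ℝ) * (β - α))) ^ m := by
  obtain ⟨hα0, hα1⟩ := hα
  obtain ⟨hβα, hβ1⟩ := hβ
  have h1α : (0:ℝ) < 1 - α := by linarith
  have hνpos : 0 < ν := by
    rcases Nat.eq_zero_or_pos ν with h | h
    · exfalso
      rw [h] at hν
      simp only [Nat.cast_zero, mul_zero] at hν
      have : (0:ℝ) < 1/(1-α) := by positivity
      linarith
    · exact h
  have hexp : 1 < 2*(ν:ℝ)*(1-α) := by
    rw [div_lt_iff₀ h1α] at hν; linarith
  set q : ℝ := (2:ℝ)^(2*(ν:ℝ)*(1-α)) with hqdef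
  have hq2 : (2:ℝ) < q := by
    calc (2:ℝ) = (2:ℝ)^(1:ℝ) := (Real.rpow_one 2).symm
      _ < q := Real.rpow_lt_rpow_of_exponent_lt one_lt_two hexp
  have hqpos : (0:ℝ) < q := by linarith
  -- powers as rpow
  have hE : ∀ a b : ℝ, (2:ℝ)^a * (2:ℝ)^b = (2:ℝ)^(a+b) :=
    fun a b => (Real.rpow_add two_pos a b).symm
  have hpowq : ∀ j:ℕ, q^j = (2:ℝ)^(2*(ν:ℝ)*(1-α)*(j:ℝ)) := by
    intro j
    rw [← Real.rpow_natCast q j, hqdef, ← Real.rpow_mul (by norm_num : (0:ℝ) ≤ 2)]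
  -- the step size
  set T : ℝ := (2:ℝ)^(-(2*(ν:ℤ)*(m:ℤ)+1)) with hTdef
  have hTpos : 0 < T := by
    rw [hTdef]; positivity
  have hTr : T = (2:ℝ)^((-(2*(ν:ℝ)*(m:ℝ)+1)) : ℝ) := by
    rw [hTdef, ← Real.rpow_intCast 2 (-(2*(ν:ℤ)*(m:ℤ)+1))]
    push_cast
    ring_nf
  have habs_t : |tstep ν m x| = T := by
    unfold tstep
    split_ifs
    · exact abs_of_pos hTpos
    · rw [abs_neg]; exact abs_of_pos hTpos
  have ht_or : tstep ν m x = (2:ℝ)^(-(2*(ν:ℤ)*(m:ℤ)+1)) ∨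
      tstep ν m x = -(2:ℝ)^(-(2*(ν:ℤ)*(m:ℤ)+1)) := by
    unfold tstep; split_ifs
    exacts [Or.inl rfl, Or.inr rfl]
  -- summability
  have hf := Kfun_summable α ν hα0 hνpos (x + tstep ν m x)
  have hg := Kfun_summable α ν hα0 hνpos x
  -- difference is a finite sum
  have hdiff : Kfun α ν (x + tstep ν m x) - Kfun α ν x
      = ∑ k ∈ Finset.range (m+1),
          (2:ℝ)^(-(2*α*(ν:ℝ)*(k:ℝ)))
            * (phi ((2:ℝ)^(2*ν*k) * (x + tstep ν m x)) - phi ((2:ℝ)^(2*ν*k) * x)) := by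
    rw [Kfun, Kfun, ← Summable.tsum_sub hf hg]
    rw [tsum_eq_sum (s := Finset.range (m+1))]
    · exact Finset.sum_congr rfl (fun k _ => by ring)
    · intro k hk
      have hk' : m < k := by
        simp only [Finset.mem_range] at hk; omega
      rw [term_vanish ν m k hνpos hk' x _ ht_or]
      ring
  set F : ℕ → ℝ := fun k =>
    (2:ℝ)^(-(2*α*(ν:ℝ)*(k:ℝ)))
      * (phi ((2:ℝ)^(2*ν*k) * (x + tstep ν m x)) - phi ((2:ℝ)^(2*ν*k) * x)) with hF
  -- bound on k-th term
  have hterm_le : ∀ k : ℕ, |F k| ≤ T * q^k := by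
    intro k
    rw [hF]
    simp only []
    rw [abs_mul, abs_of_pos (Real.rpow_pos_of_pos two_pos _)]
    have hlip : |phi ((2:ℝ)^(2*ν*k) * (x + tstep ν m x)) - phi ((2:ℝ)^(2*ν*k) * x)|
        ≤ (2:ℝ)^(2*ν*k) * T := by
      calc _ ≤ |(2:ℝ)^(2*ν*k) * (x + tstep ν m x) - (2:ℝ)^(2*ν*k) * x| := phi_lip _ _
        _ = (2:ℝ)^(2*ν*k) * |tstep ν m x| := by
            rw [show (2:ℝ)^(2*ν*k) * (x + tstep ν m x) - (2:ℝ)^(2*ν*k) * x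
              = (2:ℝ)^(2*ν*k) * tstep ν m x by ring, abs_mul, abs_of_pos (by positivity)]
        _ = (2:ℝ)^(2*ν*k) * T := by rw [habs_t]
    calc (2:ℝ)^(-(2*α*(ν:ℝ)*(k:ℝ))) * |phi ((2:ℝ)^(2*ν*k) * (x + tstep ν m x)) - phi ((2:ℝ)^(2*ν*k) * x)|
        ≤ (2:ℝ)^(-(2*α*(ν:ℝ)*(k:ℝ))) * ((2:ℝ)^(2*ν*k) * T) :=
          mul_le_mul_of_nonneg_left hlip (Real.rpow_pos_of_pos two_pos _).le
      _ = T * q^k := by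
          rw [hpowq, ← Real.rpow_natCast 2 (2*ν*k), ← mul_assoc, hE, hTr, hE, hE]
          congr 1
          push_cast
          ring
  -- the m-th term
  have hterm_m : |F m| = T * q^m := by
    have hhalf : (2:ℝ)^(2*ν*m) * T = 1/2 := by
      rw [hTdef, ← zpow_natCast (2:ℝ) (2*ν*m), ← zpow_add₀ (two_ne_zero) ]
      rw [show ((2*ν*m : ℕ) : ℤ) + (-(2*(ν:ℤ)*(m:ℤ)+1)) = -1 by push_cast; ring]
      norm_num
    have harg : (2:ℝ)^(2*ν*m) * (x + tstep ν m x)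
        = (2:ℝ)^(2*ν*m) * x +
          (if Int.fract ((2:ℝ)^(2*ν*m) * x) ∈ Set.Ioc (0:ℝ) (1/2) then (1/2:ℝ) else -(1/2)) := by
      unfold tstep
      split_ifs
      · rw [mul_add, ← hTdef, hhalf]
      · rw [mul_add, ← hTdef]
        rw [mul_neg, hhalf]
    rw [hF]
    simp only []
    rw [abs_mul, abs_of_pos (Real.rpow_pos_of_pos two_pos _), harg, phi_step]
    rw [hpowq, hTr, hE]
    rw [show (2:ℝ)^(-(2*α*(ν:ℝ)*(m:ℝ))) * (1/2)
        = (2:ℝ)^(-(2*α*(ν:ℝ)*(m:ℝ))) * (2:ℝ)^((-1:ℝ)) by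
      norm_num [Real.rpow_neg_one]]
    rw [hE]
    congr 1
    ring
  -- lower bound on the difference
  have hsum_le : ∑ k ∈ Finset.range m, |F k| ≤ T * ((q^m - 1)/(q-1)) := by
    calc ∑ k ∈ Finset.range m, |F k| ≤ ∑ k ∈ Finset.range m, T * q^k :=
          Finset.sum_le_sum (fun k _ => hterm_le k)
      _ = T * ((q^m - 1)/(q-1)) := by
          rw [← Finset.mul_sum, geom_sum_eq (by linarith : q ≠ 1)]
  have hKlow : T * (q^m * ((q-2)/(q-1))) ≤ |Kfun α ν (x + tstep ν m x) - Kfun α ν x| := by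
    rw [hdiff, Finset.sum_range_succ]
    have h1 : |F m| - |∑ k ∈ Finset.range m, F k|
        ≤ |∑ k ∈ Finset.range m, F k + F m| := by
      have hthis := abs_add_le (∑ k ∈ Finset.range m, F k + F m) (-(∑ k ∈ Finset.range m, F k))
      have e : ∑ k ∈ Finset.range m, F k + F m + -∑ k ∈ Finset.range m, F k = F m := by ring
      rw [e, abs_neg] at hthis
      linarith
    have h2 : |∑ k ∈ Finset.range m, F k| ≤ T * ((q^m - 1)/(q-1)) :=
      le_trans (Finset.abs_sum_le_sum_abs _ _) hsum_le
    have h3 : T * (q^m * ((q-2)/(q-1))) ≤ T * q^m - T * ((q^m - 1)/(q-1)) := by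
      have hq1 : (0:ℝ) < q - 1 := by linarith
      have key : q^m * ((q-2)/(q-1)) ≤ q^m - (q^m - 1)/(q-1) := by
        have e : q^m - (q^m - 1)/(q-1) - q^m * ((q-2)/(q-1)) = 1/(q-1) := by
          field_simp
          ring
        have hpos : (0:ℝ) < 1/(q-1) := by positivity
        linarith
      have h3' := mul_le_mul_of_nonneg_left key hTpos.le
      rw [mul_sub] at h3'
      linarith
    calc T * (q^m * ((q-2)/(q-1))) ≤ T * q^m - T * ((q^m - 1)/(q-1)) := h3
      _ ≤ |F m| - |∑ k ∈ Finset.range m, F k| := by rw [hterm_m]; linarith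
      _ ≤ |∑ k ∈ Finset.range m, F k + F m| := h1
  -- final computation
  rw [ge_iff_le, le_div_iff₀ (by rw [habs_t]; exact Real.rpow_pos_of_pos hTpos β)]
  have hTb : |tstep ν m x| ^ β = (2:ℝ)^((-(2*(ν:ℝ)*(m:ℝ)+1)) * β) := by
    rw [habs_t, hTr, ← Real.rpow_mul (by norm_num : (0:ℝ) ≤ 2)]
  have hRHS : (2:ℝ)^(β-1) * ((q - 2)/(q - 1)) * ((2:ℝ)^(2*(ν:ℝ)*(β-α)))^m
      * |tstep ν m x| ^ β = T * (q^m * ((q-2)/(q-1))) := by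
    rw [hTb, hTr, hpowq]
    rw [← Real.rpow_natCast ((2:ℝ)^(2*(ν:ℝ)*(β-α))) m, ← Real.rpow_mul (by norm_num : (0:ℝ) ≤ 2)]
    rw [show (2:ℝ)^(β-1) * ((q - 2)/(q - 1)) * (2:ℝ)^(2*(ν:ℝ)*(β-α)*(m:ℝ))
            * (2:ℝ)^((-(2*(ν:ℝ)*(m:ℝ)+1)) * β)
        = ((2:ℝ)^(β-1) * (2:ℝ)^(2*(ν:ℝ)*(β-α)*(m:ℝ)) * (2:ℝ)^((-(2*(ν:ℝ)*(m:ℝ)+1)) * β))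
            * ((q - 2)/(q - 1)) by ring]
    rw [hE, hE]
    rw [show (2:ℝ)^((-(2*(ν:ℝ)*(m:ℝ)+1)):ℝ) * ((2:ℝ)^(2*(ν:ℝ)*(1-α)*(m:ℝ)) * ((q-2)/(q-1)))
        = ((2:ℝ)^((-(2*(ν:ℝ)*(m:ℝ)+1)):ℝ) * (2:ℝ)^(2*(ν:ℝ)*(1-α)*(m:ℝ))) * ((q-2)/(q-1)) by ring]
    rw [hE]
    congr 2
    ring
  rw [hRHS]
  exact hKlow
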